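/- Faà di Bruno's formula: for ℓ-times differentiable functions g and f, the ℓ-th derivative of g∘f at t equals the sum over all partitions λ = {a₁,...,a_k} of ℓ of (ℓ!/(a₁!···a_k!)) · (1/(β₁!···β_k!)) · g^{(k)}(f(t)) · ∏_{i=1}^k f^{(a_i)}(t), where β_j is the number of parts of λ equal to j. -/

import Mathlib

open OrderedFinpartition Finset

namespace FaaAux

variable {n : ℕ}

lemma multiset_map_univ_eq {m : ℕ} (f : Fin m → ℕ) (k : Fin m) :
    Multiset.map f Finset.univ.val = f k ::ₘ Multiset.map f (Finset.univ.erase k).val := by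
  classical
  conv_lhs => rw [← Finset.insert_erase (Finset.mem_univ k)]
  rw [Finset.insert_val,
    Multiset.ndinsert_of_notMem (show k ∉ (Finset.univ.erase k).val by rw [Finset.erase_val]; exact Finset.univ.nodup.notMem_erase),
    Multiset.map_cons]

lemma multiset_map_update {m : ℕ} (f : Fin m → ℕ) (k : Fin m) (v : ℕ) :
    Multiset.map (Function.update f k v) Finset.univ.val
      = v ::ₘ Multiset.map f (Finset.univ.erase k).val := by
  classical
  rw [multiset_map_univ_eq (Function.update f k v) k, Function.update_self]
  congr 1
  apply Multiset.map_congr rfl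
  intro i hi
  have : i ≠ k := by
    have : i ∈ Finset.univ.erase k := hi
    simpa using (Finset.mem_erase.1 this).1
  simp [Function.update_of_ne this]

/-- The multiset of part sizes of an ordered finpartition. -/
def sizes (c : OrderedFinpartition n) : Multiset ℕ :=
  Multiset.map c.partSize Finset.univ.val

lemma sizes_card (c : OrderedFinpartition n) : Multiset.card (sizes c) = c.length := by
  simp [sizes]

lemma sizes_sum (c : OrderedFinpartition n) : (sizes c).sum = n := by
  have h := Fintype.card_congr c.equivSigma
  simp only [Fintype.card_sigma, Fintype.card_fin] at h
  simpa [sizes, Finset.sum] using h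

lemma sizes_pos (c : OrderedFinpartition n) : ∀ a ∈ sizes c, 0 < a := by
  intro a ha
  simp only [sizes, Multiset.mem_map] at ha
  obtain ⟨i, -, rfl⟩ := ha
  exact c.partSize_pos i

lemma sizes_map_prod (c : OrderedFinpartition n) (x : ℕ → ℝ) :
    ((sizes c).map x).prod = ∏ i, x (c.partSize i) := by
  simp [sizes, Finset.prod, Multiset.map_map, Function.comp_def]

lemma sizes_extendLeft (c : OrderedFinpartition n) :
    sizes c.extendLeft = 1 ::ₘ sizes c := by
  classical
  simp only [sizes, extendLeft]
  show Multiset.map (Fin.cons 1 c.partSize : Fin (c.length+1) → ℕ) (Finset.univ : Finset (Fin (c.length+1))).val = _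
  rw [Fin.univ_succ, Finset.cons_val, Multiset.map_cons, Fin.cons_zero]
  congr 1
  rw [Finset.map_val, Multiset.map_map]
  apply Multiset.map_congr rfl
  intro i _
  simp

lemma sizes_extendMiddle (c : OrderedFinpartition n) (k : Fin c.length) :
    sizes (c.extendMiddle k) = (c.partSize k + 1) ::ₘ ((sizes c).erase (c.partSize k)) := by
  classical
  have h1 : sizes (c.extendMiddle k)
      = (c.partSize k + 1) ::ₘ Multiset.map c.partSize (Finset.univ.erase k).val :=
    multiset_map_update c.partSize k (c.partSize k + 1)
  have h2 : sizes c = c.partSize k ::ₘ Multiset.map c.partSize (Finset.univ.erase k).val :=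
    multiset_map_univ_eq c.partSize k
  rw [h1, h2, Multiset.erase_cons_head]

/-- The factor `∏ β_j!` of factorials of multiplicities. -/
def G (m : Multiset ℕ) : ℕ := ∏ j ∈ m.toFinset, (m.count j).factorial

/-- The factor `∏ a_i!`. -/
def A (m : Multiset ℕ) : ℕ := (m.map Nat.factorial).prod

def F (m : Multiset ℕ) : ℕ := A m * G m

lemma G_cons (b : ℕ) (ν : Multiset ℕ) : G (b ::ₘ ν) = (ν.count b + 1) * G ν := by
  classical
  by_cases hb : b ∈ ν.toFinset
  · have ht : (b ::ₘ ν).toFinset = ν.toFinset := by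
      rw [Multiset.toFinset_cons, Finset.insert_eq_self.2 hb]
    rw [G, G, ht, ← Finset.mul_prod_erase _ _ hb, ← Finset.mul_prod_erase _ _ hb]
    have h1 : ((b ::ₘ ν).count b).factorial = (ν.count b + 1) * (ν.count b).factorial := by
      rw [Multiset.count_cons_self]; rfl
    have h2 : ∏ j ∈ ν.toFinset.erase b, ((b ::ₘ ν).count j).factorial
        = ∏ j ∈ ν.toFinset.erase b, (ν.count j).factorial := by
      apply Finset.prod_congr rfl
      intro j hj
      rw [Multiset.count_cons_of_ne (Finset.mem_erase.1 hj).1]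
    rw [h1, h2]; ring
  · have hbv : b ∉ ν := by simpa using hb
    rw [G, G, Multiset.toFinset_cons, Finset.prod_insert hb]
    have h1 : ((b ::ₘ ν).count b) = 1 := by
      rw [Multiset.count_cons_self, Multiset.count_eq_zero_of_notMem hbv]
    have h2 : ∏ j ∈ ν.toFinset, ((b ::ₘ ν).count j).factorial
        = ∏ j ∈ ν.toFinset, (ν.count j).factorial := by
      apply Finset.prod_congr rfl
      intro j hj
      rw [Multiset.count_cons_of_ne (by rintro rfl; exact hb hj)]
    rw [h1, h2, Multiset.count_eq_zero_of_notMem hbv]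
    simp [Nat.factorial]

lemma A_cons (b : ℕ) (ν : Multiset ℕ) : A (b ::ₘ ν) = b.factorial * A ν := by
  simp [A, mul_comm]

lemma A_pos (m : Multiset ℕ) : 0 < A m := by
  apply Multiset.prod_pos
  intro a ha
  simp only [Multiset.mem_map] at ha
  obtain ⟨b, -, rfl⟩ := ha
  exact Nat.factorial_pos b

lemma G_pos (m : Multiset ℕ) : 0 < G m :=
  Finset.prod_pos fun j _ => Nat.factorial_pos _

/-- The key counting lemma: the number of ordered finpartitions of `n` with part-size
multiset `λ`, times `∏ aᵢ! ∏ βⱼ!`, is `n!`. -/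
lemma sizes_mem_self (c : OrderedFinpartition n) (k : Fin c.length) :
    c.partSize k ∈ sizes c := by
  simp only [sizes, Multiset.mem_map]
  exact ⟨k, by simp, rfl⟩

lemma count_partSize (c : OrderedFinpartition n) (b : ℕ) :
    (∑ k : Fin c.length, if c.partSize k = b then 1 else 0) = (sizes c).count b := by
  classical
  rw [Finset.sum_boole, Nat.cast_id, sizes, Multiset.count_map, Finset.card_def,
    Finset.filter_val]
  exact congrArg Multiset.card (Multiset.filter_congr (fun x _ => eq_comm))

/-- Arithmetic identity relating `F (a ::ₘ e)` and `F ((a-1) ::ₘ e)` for `a ≥ 2`. -/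
lemma identityA' (a : ℕ) (ha2 : 2 ≤ a) (e : Multiset ℕ) :
    (e.count (a - 1) + 1) * F (a ::ₘ e)
      = a * ((a ::ₘ e).count a) * F ((a - 1) ::ₘ e) := by
  classical
  have hfa : a.factorial = a * (a - 1).factorial := by
    conv_lhs => rw [show a = (a - 1) + 1 by omega]
    rw [Nat.factorial_succ]
    congr 2
    omega
  simp only [F]
  rw [A_cons, A_cons, G_cons, G_cons, Multiset.count_cons_self, hfa]
  ring

lemma identity1' (e : Multiset ℕ) :
    (e.count 1 + 1) * F e = F (1 ::ₘ e) := by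
  classical
  simp only [F]
  rw [A_cons, G_cons, Nat.factorial_one]
  ring

lemma identityA {lam : Multiset ℕ} {a : ℕ} (ha : a ∈ lam) (ha2 : 2 ≤ a) :
    ((lam.erase a).count (a - 1) + 1) * F lam
      = a * lam.count a * F ((a - 1) ::ₘ lam.erase a) := by
  have h := identityA' a ha2 (lam.erase a)
  rw [Multiset.cons_erase ha] at h
  exact h

lemma identity1 {lam : Multiset ℕ} (ha : 1 ∈ lam) :
    lam.count 1 * F (lam.erase 1) = F lam := by
  have h := identity1' (lam.erase 1)
  rw [Multiset.cons_erase ha] at h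
  rw [← h]
  congr 1
  conv_lhs => rw [← Multiset.cons_erase ha, Multiset.count_cons_self]

lemma key_count : ∀ (n : ℕ) (lam : Multiset ℕ), (∀ a ∈ lam, 0 < a) → lam.sum = n →
    (Finset.univ.filter (fun c : OrderedFinpartition n => sizes c = lam)).card * F lam
      = n.factorial := by
  intro n
  induction n with
  | zero =>
    intro lam hpos hsum
    have hlam : lam = 0 := by
      rw [Multiset.eq_zero_iff_forall_notMem]
      intro a ha
      have h1 := hpos a ha
      have h2 := Multiset.single_le_sum (fun b hb => Nat.zero_le b) a ha
      omega
    subst hlam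
    have hall : ∀ c : OrderedFinpartition 0, sizes c = 0 := by
      intro c
      have h0 : c.length = 0 := Nat.le_zero.1 c.length_le
      apply Multiset.card_eq_zero.1
      rw [sizes_card, h0]
    rw [Finset.filter_true_of_mem (fun c _ => hall c)]
    simp [F, A, G]
  | succ n IH =>
    intro lam hpos hsum
    classical
    have hNzero : ∀ m : Multiset ℕ, 0 ∈ m →
        (Finset.univ.filter (fun c : OrderedFinpartition n => sizes c = m)).card = 0 := by
      intro m hm
      rw [Finset.card_eq_zero, Finset.filter_eq_empty_iff]
      intro c _
      intro hcm
      have := sizes_pos c 0 (by rw [hcm]; exact hm)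
      omega
    -- Step 1: the cardinality as a double sum via `extendEquiv`
    have step1 : (Finset.univ.filter
        (fun d : OrderedFinpartition (n+1) => sizes d = lam)).card
        = ∑ c : OrderedFinpartition n,
            ((if 1 ::ₘ sizes c = lam then 1 else 0)
              + ∑ k : Fin c.length,
                  (if (c.partSize k + 1) ::ₘ ((sizes c).erase (c.partSize k)) = lam
                   then 1 else 0)) := by
      rw [Finset.card_filter]
      rw [← Equiv.sum_comp (OrderedFinpartition.extendEquiv n)
        (fun d => if sizes d = lam then 1 else 0)]
      rw [← Finset.univ_sigma_univ, Finset.sum_sigma]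
      apply Finset.sum_congr rfl
      intro c _
      rw [Fintype.sum_option]
      congr 1
      · rw [show (OrderedFinpartition.extendEquiv n) ⟨c, none⟩ = c.extendLeft from rfl,
          sizes_extendLeft]
      · apply Finset.sum_congr rfl
        intro k _
        rw [show (OrderedFinpartition.extendEquiv n) ⟨c, some k⟩ = c.extendMiddle k from rfl,
          sizes_extendMiddle]
    -- Step 2: split the middle indicator over the possible values `a = partSize k + 1`
    have hsplit : ∀ (c : OrderedFinpartition n) (k : Fin c.length),
        (if (c.partSize k + 1) ::ₘ ((sizes c).erase (c.partSize k)) = lam then 1 else 0)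
        = ∑ a ∈ lam.toFinset,
            (if c.partSize k + 1 = a ∧ sizes c = (a - 1) ::ₘ lam.erase a then (1:ℕ) else 0) := by
      intro c k
      by_cases h : (c.partSize k + 1) ::ₘ ((sizes c).erase (c.partSize k)) = lam
      · have hmem : c.partSize k + 1 ∈ lam := by
          rw [← h]; exact Multiset.mem_cons_self _ _
        have hsk : c.partSize k ∈ sizes c := sizes_mem_self c k
        have hx : sizes c = ((c.partSize k + 1) - 1) ::ₘ lam.erase (c.partSize k + 1) := by
          rw [← h, Multiset.erase_cons_head, Nat.add_sub_cancel, Multiset.cons_erase hsk]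
        rw [if_pos h]
        rw [Finset.sum_eq_single_of_mem (c.partSize k + 1) (Multiset.mem_toFinset.2 hmem)]
        · rw [if_pos ⟨rfl, hx⟩]
        · intro b hb hne
          rw [if_neg]
          rintro ⟨h1, -⟩
          exact hne h1.symm
      · rw [if_neg h]
        symm
        apply Finset.sum_eq_zero
        intro a ha
        rw [if_neg]
        rintro ⟨h1, h2⟩
        apply h
        have hamem : a ∈ lam := Multiset.mem_toFinset.1 ha
        have hpa : 0 < a := hpos a hamem
        have hsk : c.partSize k = a - 1 := by omega
        rw [h2, hsk, Multiset.erase_cons_head, show a - 1 + 1 = a by omega]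
        exact Multiset.cons_erase hamem
    -- Step 3: for fixed `a`, compute the double sum
    have step3 : ∀ a ∈ lam.toFinset,
        (∑ c : OrderedFinpartition n, ∑ k : Fin c.length,
          (if c.partSize k + 1 = a ∧ sizes c = (a - 1) ::ₘ lam.erase a then (1:ℕ) else 0))
        = ((lam.erase a).count (a - 1) + 1)
            * (Finset.univ.filter
              (fun c : OrderedFinpartition n =>
                sizes c = (a - 1) ::ₘ lam.erase a)).card := by
      intro a ha
      have hpa : 0 < a := hpos a (Multiset.mem_toFinset.1 ha)
      have hone : ∀ c : OrderedFinpartition n,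
          (∑ k : Fin c.length,
            (if c.partSize k + 1 = a ∧ sizes c = (a - 1) ::ₘ lam.erase a then (1:ℕ) else 0))
          = if sizes c = (a - 1) ::ₘ lam.erase a
              then ((lam.erase a).count (a - 1) + 1) else 0 := by
        intro c
        by_cases hc : sizes c = (a - 1) ::ₘ lam.erase a
        · rw [if_pos hc]
          have : ∀ k : Fin c.length,
              (if c.partSize k + 1 = a ∧ sizes c = (a - 1) ::ₘ lam.erase a then (1:ℕ) else 0)
              = if c.partSize k = a - 1 then 1 else 0 := by
            intro k
            congr 1
            simp only [hc, and_true, eq_iff_iff]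
            omega
          rw [Finset.sum_congr rfl (fun k _ => this k), count_partSize c (a-1), hc,
            Multiset.count_cons_self]
        · rw [if_neg hc]
          apply Finset.sum_eq_zero
          intro k _
          rw [if_neg]
          rintro ⟨-, h2⟩
          exact hc h2
      rw [Finset.sum_congr rfl (fun c _ => hone c)]
      have hmul : ∀ c : OrderedFinpartition n,
          (if sizes c = (a - 1) ::ₘ lam.erase a
            then ((lam.erase a).count (a - 1) + 1) else 0)
          = ((lam.erase a).count (a - 1) + 1)
              * (if sizes c = (a - 1) ::ₘ lam.erase a then 1 else 0) := by
        intro c; split <;> simp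
      rw [Finset.sum_congr rfl (fun c _ => hmul c), ← Finset.mul_sum, Finset.sum_boole,
        Nat.cast_id]
    -- Step 4: the `extendLeft` sum
    have step4 : (∑ c : OrderedFinpartition n, (if 1 ::ₘ sizes c = lam then (1:ℕ) else 0))
        = if 1 ∈ lam then (Finset.univ.filter
            (fun c : OrderedFinpartition n => sizes c = lam.erase 1)).card else 0 := by
      by_cases h1 : 1 ∈ lam
      · rw [if_pos h1, Finset.card_filter]
        apply Finset.sum_congr rfl
        intro c _
        congr 1
        simp only [eq_iff_iff]
        constructor
        · intro h
          rw [← h, Multiset.erase_cons_head]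
        · intro h
          rw [h, Multiset.cons_erase h1]
      · rw [if_neg h1]
        apply Finset.sum_eq_zero
        intro c _
        rw [if_neg]
        intro h
        exact h1 (by rw [← h]; exact Multiset.mem_cons_self _ _)
    -- Now put everything together
    have herase_pos : ∀ a, ∀ b ∈ lam.erase a, 0 < b :=
      fun a b hb => hpos b (Multiset.mem_of_mem_erase hb)
    have hsum_erase : ∀ a ∈ lam, a + (lam.erase a).sum = n + 1 := by
      intro a ha
      have : lam = a ::ₘ lam.erase a := (Multiset.cons_erase ha).symm
      rw [← hsum]
      conv_rhs => rw [this, Multiset.sum_cons]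
    -- value of the `extendLeft` contribution
    have hSLF : (∑ c : OrderedFinpartition n,
        (if 1 ::ₘ sizes c = lam then (1:ℕ) else 0)) * F lam
        = if 1 ∈ lam then lam.count 1 * n.factorial else 0 := by
      rw [step4]
      by_cases h1 : 1 ∈ lam
      · rw [if_pos h1, if_pos h1]
        have hIH := IH (lam.erase 1) (herase_pos 1)
          (by have := hsum_erase 1 h1; omega)
        calc (Finset.univ.filter (fun c : OrderedFinpartition n =>
              sizes c = lam.erase 1)).card * F lam
            = (Finset.univ.filter (fun c : OrderedFinpartition n =>
                sizes c = lam.erase 1)).card * (lam.count 1 * F (lam.erase 1)) := by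
              rw [identity1 h1]
          _ = lam.count 1 * ((Finset.univ.filter (fun c : OrderedFinpartition n =>
                sizes c = lam.erase 1)).card * F (lam.erase 1)) := by ring
          _ = lam.count 1 * n.factorial := by rw [hIH]
      · rw [if_neg h1, if_neg h1, zero_mul]
    -- per-`a` term computation
    have hterm : ∀ a ∈ lam.toFinset,
        ((lam.erase a).count (a - 1) + 1)
          * (Finset.univ.filter (fun c : OrderedFinpartition n =>
              sizes c = (a - 1) ::ₘ lam.erase a)).card * F lam
          + (if a = 1 then lam.count 1 * n.factorial else 0)
        = a * lam.count a * n.factorial := by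
      intro a ha
      have hamem : a ∈ lam := Multiset.mem_toFinset.1 ha
      have hpa : 0 < a := hpos a hamem
      rcases eq_or_lt_of_le (Nat.succ_le_of_lt hpa) with h1 | h2
      · -- a = 1
        have ha1 : a = 1 := h1.symm
        subst ha1
        rw [if_pos rfl]
        have hz : (Finset.univ.filter (fun c : OrderedFinpartition n =>
            sizes c = (1 - 1) ::ₘ lam.erase 1)).card = 0 := by
          apply hNzero
          exact Multiset.mem_cons_self _ _
        rw [hz]
        ring
      · -- 2 ≤ a
        have ha2 : 2 ≤ a := h2
        rw [if_neg (by omega)]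
        have hmupos : ∀ b ∈ (a - 1) ::ₘ lam.erase a, 0 < b := by
          intro b hb
          rcases Multiset.mem_cons.1 hb with rfl | hb'
          · omega
          · exact herase_pos a b hb'
        have hmusum : ((a - 1) ::ₘ lam.erase a).sum = n := by
          rw [Multiset.sum_cons]
          have := hsum_erase a hamem
          omega
        have hIH := IH ((a - 1) ::ₘ lam.erase a) hmupos hmusum
        calc ((lam.erase a).count (a - 1) + 1)
              * (Finset.univ.filter (fun c : OrderedFinpartition n =>
                  sizes c = (a - 1) ::ₘ lam.erase a)).card * F lam + 0
            = (Finset.univ.filter (fun c : OrderedFinpartition n =>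
                  sizes c = (a - 1) ::ₘ lam.erase a)).card
                * (((lam.erase a).count (a - 1) + 1) * F lam) := by ring
          _ = (Finset.univ.filter (fun c : OrderedFinpartition n =>
                  sizes c = (a - 1) ::ₘ lam.erase a)).card
                * (a * lam.count a * F ((a - 1) ::ₘ lam.erase a)) := by
                rw [identityA hamem ha2]
          _ = a * lam.count a * ((Finset.univ.filter (fun c : OrderedFinpartition n =>
                  sizes c = (a - 1) ::ₘ lam.erase a)).card
                    * F ((a - 1) ::ₘ lam.erase a)) := by ring
          _ = a * lam.count a * n.factorial := by rw [hIH]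
    -- final assembly
    rw [step1]
    rw [Finset.sum_congr rfl (fun c _ => by
      rw [Finset.sum_congr rfl (fun k _ => hsplit c k)])]
    rw [Finset.sum_add_distrib, add_mul]
    have hswap : (∑ c : OrderedFinpartition n, ∑ k : Fin c.length,
        ∑ a ∈ lam.toFinset,
          (if c.partSize k + 1 = a ∧ sizes c = (a - 1) ::ₘ lam.erase a then (1:ℕ) else 0))
        = ∑ a ∈ lam.toFinset, ∑ c : OrderedFinpartition n, ∑ k : Fin c.length,
          (if c.partSize k + 1 = a ∧ sizes c = (a - 1) ::ₘ lam.erase a then (1:ℕ) else 0) := by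
      rw [Finset.sum_congr rfl (fun c _ => Finset.sum_comm)]
      exact Finset.sum_comm
    rw [hswap, Finset.sum_congr rfl step3, hSLF]
    have hind : (if 1 ∈ lam then lam.count 1 * n.factorial else 0)
        = ∑ a ∈ lam.toFinset, (if a = 1 then lam.count 1 * n.factorial else 0) := by
      rw [Finset.sum_ite_eq' lam.toFinset 1 (fun _ => lam.count 1 * n.factorial)]
      simp only [Multiset.mem_toFinset]
    rw [hind, Finset.sum_mul, ← Finset.sum_add_distrib]
    rw [Finset.sum_congr rfl (fun a ha => (add_comm _ _).trans (hterm a ha))]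
    have hsum_id : ∑ a ∈ lam.toFinset, a * lam.count a * n.factorial
        = (n + 1) * n.factorial := by
      rw [← Finset.sum_mul]
      congr 1
      have h := Finset.sum_multiset_map_count lam (id : ℕ → ℕ)
      simp only [Multiset.map_id, Multiset.map_id', smul_eq_mul, id] at h
      rw [Finset.sum_congr rfl (fun a _ => mul_comm a (lam.count a)), ← hsum]
      exact h.symm
    rw [hsum_id, Nat.factorial_succ]

/-- Scalar Faà di Bruno over ordered finpartitions. -/
lemma stepA (ℓ : ℕ) (f g : ℝ → ℝ) (t : ℝ)
    (hf : ContDiffAt ℝ ℓ f t) (hg : ContDiffAt ℝ ℓ g (f t)) :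
    iteratedDeriv ℓ (fun s => g (f s)) t = ∑ c : OrderedFinpartition ℓ,
      (∏ i, iteratedDeriv (c.partSize i) f t) * iteratedDeriv c.length g (f t) := by
  obtain ⟨v0, hv0, hgv0⟩ := hg.contDiffOn le_rfl (by simp)
  obtain ⟨v, hvsub, hvo, hvm⟩ := mem_nhds_iff.1 hv0
  obtain ⟨u0, hu0, hfu0⟩ := hf.contDiffOn le_rfl (by simp)
  obtain ⟨u, husub, huo, hum⟩ := mem_nhds_iff.1 hu0
  have hgv : ContDiffOn ℝ ℓ g v := hgv0.mono hvsub
  have hfu : ContDiffOn ℝ ℓ f u := hfu0.mono husub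
  set s : Set ℝ := u ∩ f ⁻¹' v with hsdef
  have hso : IsOpen s := hfu.continuousOn.isOpen_inter_preimage huo hvo
  have hts : t ∈ s := ⟨hum, hvm⟩
  have hsud : UniqueDiffOn ℝ s := hso.uniqueDiffOn
  have hvud : UniqueDiffOn ℝ v := hvo.uniqueDiffOn
  have hfs : ContDiffOn ℝ ℓ f s := hfu.mono Set.inter_subset_left
  have hp : HasFTaylorSeriesUpToOn ℓ f (ftaylorSeriesWithin ℝ f s) s :=
    hfs.ftaylorSeriesWithin hsud
  have hq : HasFTaylorSeriesUpToOn ℓ g (ftaylorSeriesWithin ℝ g v) v :=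
    hgv.ftaylorSeriesWithin hvud
  have hmaps : Set.MapsTo f s v := fun x hx => hx.2
  have hcomp := hq.comp hp hmaps
  have h1 : ((ftaylorSeriesWithin ℝ g v (f t)).taylorComp (ftaylorSeriesWithin ℝ f s t)) ℓ
      = iteratedFDerivWithin ℝ ℓ (g ∘ f) s t :=
    hcomp.eq_iteratedFDerivWithin_of_uniqueDiffOn le_rfl hsud hts
  have h2 : iteratedFDerivWithin ℝ ℓ (g ∘ f) s t = iteratedFDeriv ℝ ℓ (g ∘ f) t :=
    iteratedFDerivWithin_of_isOpen ℓ hso hts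
  have key : iteratedDeriv ℓ (fun s => g (f s)) t
      = ((ftaylorSeriesWithin ℝ g v (f t)).taylorComp (ftaylorSeriesWithin ℝ f s t)) ℓ
          (fun _ => (1:ℝ)) := by
    rw [h1, h2]
    exact iteratedDeriv_eq_iteratedFDeriv
  rw [key, FormalMultilinearSeries.taylorComp, ContinuousMultilinearMap.sum_apply]
  apply Finset.sum_congr rfl
  intro c _
  rw [FormalMultilinearSeries.compAlongOrderedFinpartition_apply]
  have hps : ∀ (k : ℕ), ftaylorSeriesWithin ℝ f s t k (fun _ => (1:ℝ))
      = iteratedDeriv k f t := by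
    intro k
    have : ftaylorSeriesWithin ℝ f s t k = iteratedFDerivWithin ℝ k f s t := rfl
    rw [this, iteratedFDerivWithin_of_isOpen k hso hts, ← iteratedDeriv_eq_iteratedFDeriv]
  have hqs : ∀ (k : ℕ), ftaylorSeriesWithin ℝ g v (f t) k (fun _ => (1:ℝ))
      = iteratedDeriv k g (f t) := by
    intro k
    have : ftaylorSeriesWithin ℝ g v (f t) k = iteratedFDerivWithin ℝ k g v (f t) := rfl
    rw [this, iteratedFDerivWithin_of_isOpen k hvo hvm, ← iteratedDeriv_eq_iteratedFDeriv]
  have happ : c.applyOrderedFinpartition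
      (fun m => ftaylorSeriesWithin ℝ f s t (c.partSize m)) (fun _ => (1:ℝ))
      = fun m => iteratedDeriv (c.partSize m) f t := by
    ext m
    exact hps (c.partSize m)
  rw [happ]
  have hw : (fun m => iteratedDeriv (c.partSize m) f t)
      = fun m => (iteratedDeriv (c.partSize m) f t) • (1:ℝ) := by
    ext m; simp
  rw [hw, ContinuousMultilinearMap.map_smul_univ, hqs, smul_eq_mul]
  simp [smul_eq_mul]

end FaaAux

/-- Faà di Bruno's formula: the ℓ-th derivative of g ∘ f at t is a sum over the partitions
λ of ℓ of the multinomial coefficient ℓ!/(a₁!⋯a_k!), divided by the product β₁!⋯β_k! of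
factorials of the multiplicities, times g^{(k)}(f(t)) times ∏ f^{(aᵢ)}(t). -/
theorem faa_di_bruno (ℓ : ℕ) (f g : ℝ → ℝ) (t : ℝ)
    (hf : ContDiffAt ℝ ℓ f t) (hg : ContDiffAt ℝ ℓ g (f t)) :
    iteratedDeriv ℓ (fun s => g (f s)) t
      = ∑ P : Nat.Partition ℓ,
          ((ℓ.factorial : ℝ) / ((P.parts.map Nat.factorial).prod : ℕ))
          * (1 / ((∏ j ∈ P.parts.toFinset, (P.parts.count j).factorial : ℕ) : ℝ))
          * iteratedDeriv (Multiset.card P.parts) g (f t)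
          * ((P.parts.map (fun a => iteratedDeriv a f t)).prod) := by
  classical
  rw [FaaAux.stepA ℓ f g t hf hg]
  let φ : OrderedFinpartition ℓ → Nat.Partition ℓ :=
    fun c => ⟨FaaAux.sizes c, fun h => FaaAux.sizes_pos c _ h, FaaAux.sizes_sum c⟩
  rw [← Finset.sum_fiberwise Finset.univ φ
    (fun c => (∏ i, iteratedDeriv (c.partSize i) f t) * iteratedDeriv c.length g (f t))]
  apply Finset.sum_congr rfl
  intro P _
  have hfib : ∀ c ∈ Finset.univ.filter (fun c => φ c = P),
      (∏ i, iteratedDeriv (c.partSize i) f t) * iteratedDeriv c.length g (f t)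
        = (P.parts.map (fun a => iteratedDeriv a f t)).prod
            * iteratedDeriv (Multiset.card P.parts) g (f t) := by
    intro c hc
    have hc0 : φ c = P := (Finset.mem_filter.1 hc).2
    have hc' : FaaAux.sizes c = P.parts := by
      have := congrArg Nat.Partition.parts hc0
      simpa [φ] using this
    rw [← hc', FaaAux.sizes_map_prod, FaaAux.sizes_card]
  rw [Finset.sum_congr rfl hfib, Finset.sum_const, nsmul_eq_mul]
  have hfilter : (Finset.univ.filter (fun c => φ c = P))
      = (Finset.univ.filter (fun c : OrderedFinpartition ℓ => FaaAux.sizes c = P.parts)) := by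
    apply Finset.filter_congr
    intro c _
    constructor
    · intro h
      have := congrArg Nat.Partition.parts h
      simpa [φ] using this
    · intro h
      apply Nat.Partition.ext
      simpa [φ] using h
  have hcount := FaaAux.key_count ℓ P.parts (fun a ha => P.parts_pos ha) P.parts_sum
  have hA : (0:ℝ) < ((P.parts.map Nat.factorial).prod : ℕ) := by
    exact_mod_cast FaaAux.A_pos P.parts
  have hG : (0:ℝ) < ((∏ j ∈ P.parts.toFinset, (P.parts.count j).factorial : ℕ) : ℝ) := by
    exact_mod_cast FaaAux.G_pos P.parts
  have hcard : ((Finset.univ.filter (fun c => φ c = P)).card : ℝ)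
      * (((P.parts.map Nat.factorial).prod : ℕ) : ℝ)
      * ((∏ j ∈ P.parts.toFinset, (P.parts.count j).factorial : ℕ) : ℝ)
      = (ℓ.factorial : ℝ) := by
    rw [hfilter]
    have : (Finset.univ.filter
        (fun c : OrderedFinpartition ℓ => FaaAux.sizes c = P.parts)).card
        * ((P.parts.map Nat.factorial).prod
          * ∏ j ∈ P.parts.toFinset, (P.parts.count j).factorial) = ℓ.factorial := by
      simpa [FaaAux.F, FaaAux.A, FaaAux.G, mul_assoc] using hcount
    push_cast [← this]
    ring
  have hcard' : ((Finset.univ.filter (fun c => φ c = P)).card : ℝ)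
      = (ℓ.factorial : ℝ) / (((P.parts.map Nat.factorial).prod : ℕ) : ℝ)
        * (1 / ((∏ j ∈ P.parts.toFinset, (P.parts.count j).factorial : ℕ) : ℝ)) := by
    rw [div_mul_div_comm, mul_one, eq_div_iff (by positivity), ← hcard]
    ring
  rw [hcard']
  ring
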